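/- Let F : X ⇉ Y and G : Y ⇉ Z with one of F, G polyhedral convex and the other generalized polyhedral convex. Then for any (x̄, z̄) ∈ gph(G ∘ F), any ȳ ∈ F(x̄) ∩ G⁻¹(z̄), and any w* ∈ Z*, the chain rule D*(G ∘ F)(x̄, z̄)(w*) = D*F(x̄, ȳ)(D*G(ȳ, z̄)(w*)) holds. -/

import Mathlib

open Set Pointwise

def IsPolyhedral {X : Type*} [AddCommGroup X] [Module ℝ X] [TopologicalSpace X]
    (P : Set X) : Prop :=
  ∃ (m : ℕ) (f : Fin m → X →L[ℝ] ℝ) (α : Fin m → ℝ),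
    P = {x : X | ∀ i, f i x ≤ α i}

def IsGPolyhedral {X : Type*} [AddCommGroup X] [Module ℝ X] [TopologicalSpace X]
    (Q : Set X) : Prop :=
  ∃ (P : Set X) (a : X) (L : Submodule ℝ X),
    IsPolyhedral P ∧ IsClosed (L : Set X) ∧ Q = P ∩ (a +ᵥ (L : Set X))

def normalCone {X : Type*} [AddCommGroup X] [Module ℝ X] [TopologicalSpace X]
    (Ω : Set X) (xb : X) : Set (X →L[ℝ] ℝ) :=
  {f | ∀ x ∈ Ω, f (x - xb) ≤ 0}

def gph {X Y : Type*} (F : X → Set Y) : Set (X × Y) := {p | p.2 ∈ F p.1}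

def coderiv {X Y : Type*} [AddCommGroup X] [Module ℝ X] [TopologicalSpace X]
    [AddCommGroup Y] [Module ℝ Y] [TopologicalSpace Y]
    (F : X → Set Y) (xb : X) (yb : Y) (v : Y →L[ℝ] ℝ) : Set (X →L[ℝ] ℝ) :=
  {u | ∀ x : X, ∀ y ∈ F x, u (x - xb) - v (y - yb) ≤ 0}

def epi {X : Type*} (f : X → EReal) : Set (X × ℝ) := {p | f p.1 ≤ (p.2 : EReal)}

def subdiff {X : Type*} [AddCommGroup X] [Module ℝ X] [TopologicalSpace X]
    (f : X → EReal) (xb : X) : Set (X →L[ℝ] ℝ) :=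
  {g | ∀ x : X, ((g (x - xb) : ℝ) : EReal) + f xb ≤ f x}

def singSubdiff {X : Type*} [AddCommGroup X] [Module ℝ X] [TopologicalSpace X]
    (f : X → EReal) (xb : X) : Set (X →L[ℝ] ℝ) :=
  {g | ∀ x : X, ∀ α : ℝ, f x ≤ (α : EReal) → g (x - xb) ≤ 0}


lemma farkas_fin {V : Type*} [AddCommGroup V] [Module ℝ V] :
    ∀ (n : ℕ) (c : Fin n → V →ₗ[ℝ] ℝ) (φ : V →ₗ[ℝ] ℝ),
      (∀ x, (∀ i, c i x ≤ 0) → φ x ≤ 0) →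
      ∃ lam : Fin n → ℝ, (∀ i, 0 ≤ lam i) ∧ ∀ x, φ x = ∑ i, lam i * c i x := by
  intro n
  induction n with
  | zero =>
      intro c φ h
      refine ⟨fun _ => 0, fun i => le_rfl, fun x => ?_⟩
      have h1 := h x (fun i => i.elim0)
      have h2 := h (-x) (fun i => i.elim0)
      simp only [map_neg] at h2
      simp only [Finset.univ_eq_empty, Finset.sum_empty]
      linarith
  | succ n IH =>
      intro c φ h
      by_cases hcase : ∀ x, (∀ i : Fin n, c i.castSucc x ≤ 0) → φ x ≤ 0
      · obtain ⟨lam, hlam, hid⟩ := IH (fun i => c i.castSucc) φ hcase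
        refine ⟨Fin.snoc lam 0, ?_, fun x => ?_⟩
        · intro i
          refine Fin.lastCases ?_ ?_ i
          · simp
          · intro j; simpa using hlam j
        · rw [Fin.sum_univ_castSucc]
          simp [Fin.snoc_castSucc, ← hid x]
      · push_neg at hcase
        obtain ⟨x₀, hx₀c, hx₀φ⟩ := hcase
        have hcn : 0 < c (Fin.last n) x₀ := by
          by_contra hle
          push_neg at hle
          have := h x₀ (fun i => Fin.lastCases hle hx₀c i)
          linarith
        set t₀ := c (Fin.last n) x₀ with ht₀
        have ht₀ne : t₀ ≠ 0 := ne_of_gt hcn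
        set d : Fin n → V →ₗ[ℝ] ℝ :=
          fun i => t₀ • c i.castSucc - (c i.castSucc x₀) • c (Fin.last n) with hd
        set ψ : V →ₗ[ℝ] ℝ := t₀ • φ - (φ x₀) • c (Fin.last n) with hψ
        have key : ∀ x, (∀ i, d i x ≤ 0) → ψ x ≤ 0 := by
          intro x hx
          have hy := h (x - (c (Fin.last n) x / t₀) • x₀) ?_
          · simp only [hψ, LinearMap.sub_apply, LinearMap.smul_apply, smul_eq_mul]
            simp only [map_sub, map_smul, smul_eq_mul] at hy
            have : t₀ * (φ x - c (Fin.last n) x / t₀ * φ x₀) ≤ 0 :=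
              mul_nonpos_of_nonneg_of_nonpos (le_of_lt hcn) hy
            have expand : t₀ * (φ x - c (Fin.last n) x / t₀ * φ x₀)
                = t₀ * φ x - φ x₀ * c (Fin.last n) x := by
              field_simp
            linarith [expand ▸ this]
          · intro i
            refine Fin.lastCases ?_ ?_ i
            · simp only [map_sub, map_smul, smul_eq_mul]
              rw [div_mul_cancel₀ _ ht₀ne]
              simp
            · intro j
              have hdj := hx j
              simp only [hd, LinearMap.sub_apply, LinearMap.smul_apply, smul_eq_mul] at hdj
              simp only [map_sub, map_smul, smul_eq_mul, sub_nonpos, div_mul_eq_mul_div]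
              rw [le_div_iff₀ hcn]
              nlinarith [hdj]
        obtain ⟨μ, hμ, hμid⟩ := IH d ψ key
        set S₀ := ∑ i, μ i * c i.castSucc x₀ with hS₀
        refine ⟨Fin.snoc μ ((φ x₀ - S₀) / t₀), ?_, fun x => ?_⟩
        · intro i
          refine Fin.lastCases ?_ (fun j => by simpa using hμ j) i
          · simp only [Fin.snoc_last]
            apply div_nonneg _ (le_of_lt hcn)
            have : S₀ ≤ 0 := Finset.sum_nonpos fun i _ =>
              mul_nonpos_of_nonneg_of_nonpos (hμ i) (hx₀c i)
            linarith
        · have hid := hμid x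
          simp only [hψ, hd, LinearMap.sub_apply, LinearMap.smul_apply, smul_eq_mul] at hid
          have hsum : ∑ i, μ i * (t₀ * c i.castSucc x - c i.castSucc x₀ * c (Fin.last n) x)
              = t₀ * (∑ i, μ i * c i.castSucc x) - S₀ * c (Fin.last n) x := by
            rw [hS₀, Finset.mul_sum, Finset.sum_mul, ← Finset.sum_sub_distrib]
            exact Finset.sum_congr rfl (fun i _ => by ring)
          rw [hsum] at hid
          rw [Fin.sum_univ_castSucc]
          simp only [Fin.snoc_castSucc, Fin.snoc_last]
          field_simp
          linarith

lemma farkas {V : Type*} [AddCommGroup V] [Module ℝ V] {ι : Type*} [Fintype ι]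
    (c : ι → V →ₗ[ℝ] ℝ) (φ : V →ₗ[ℝ] ℝ)
    (h : ∀ x, (∀ i, c i x ≤ 0) → φ x ≤ 0) :
    ∃ lam : ι → ℝ, (∀ i, 0 ≤ lam i) ∧ ∀ x, φ x = ∑ i, lam i * c i x := by
  obtain ⟨lam, hlam, hid⟩ := farkas_fin (Fintype.card ι)
    (fun i => c ((Fintype.equivFin ι).symm i)) φ
    (fun x hx => h x (fun i => by simpa using hx (Fintype.equivFin ι i)))
  refine ⟨fun i => lam (Fintype.equivFin ι i), fun i => hlam _, fun x => ?_⟩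
  rw [hid x]
  exact Fintype.sum_equiv (Fintype.equivFin ι).symm _ _ (fun i => by simp)

lemma exists_pos_step {ι : Type*} (v slack : ι → ℝ) :
    ∀ (s : Finset ι), (∀ i ∈ s, 0 ≤ slack i) → (∀ i ∈ s, slack i = 0 → v i ≤ 0) →
    ∃ t : ℝ, 0 < t ∧ ∀ i ∈ s, t * v i ≤ slack i := by
  classical
  intro s
  induction s using Finset.induction_on with
  | empty => exact fun _ _ => ⟨1, one_pos, fun i hi => absurd hi (Finset.notMem_empty i)⟩
  | @insert a s ha ih =>
      intro h0 h1
      obtain ⟨t, htpos, hts⟩ := ih (fun i hi => h0 i (Finset.mem_insert_of_mem hi))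
        (fun i hi => h1 i (Finset.mem_insert_of_mem hi))
      have h0a : 0 ≤ slack a := h0 a (Finset.mem_insert_self a s)
      by_cases hva : v a ≤ 0
      · refine ⟨t, htpos, fun i hi => ?_⟩
        rcases Finset.mem_insert.1 hi with rfl | hi
        · exact le_trans (mul_nonpos_of_nonneg_of_nonpos htpos.le hva) h0a
        · exact hts i hi
      · push_neg at hva
        have hsa : 0 < slack a := by
          rcases lt_or_eq_of_le h0a with h | h
          · exact h
          · exact absurd (h1 a (Finset.mem_insert_self a s) h.symm) (not_le.2 hva)
        refine ⟨min t (slack a / v a), lt_min htpos (div_pos hsa hva), fun i hi => ?_⟩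
        rcases Finset.mem_insert.1 hi with rfl | hi
        · calc min t (slack i / v i) * v i ≤ (slack i / v i) * v i :=
              mul_le_mul_of_nonneg_right (min_le_right _ _) hva.le
            _ = slack i := div_mul_cancel₀ _ (ne_of_gt hva)
        · by_cases hvi : 0 ≤ v i
          · exact le_trans (mul_le_mul_of_nonneg_right (min_le_left _ _) hvi) (hts i hi)
          · exact le_trans (mul_nonpos_of_nonneg_of_nonpos
              (lt_min htpos (div_pos hsa hva)).le (not_le.1 hvi).le)
              (h0 i (Finset.mem_insert_of_mem hi))

set_option maxHeartbeats 2000000 in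
lemma chain_core
    {X : Type*} [AddCommGroup X] [Module ℝ X] [TopologicalSpace X]
    {Y : Type*} [AddCommGroup Y] [Module ℝ Y] [TopologicalSpace Y]
    {Z : Type*} [AddCommGroup Z] [Module ℝ Z] [TopologicalSpace Z]
    (F : X → Set Y) (G : Y → Set Z)
    {m k : ℕ} (f : Fin m → (X × Y) →L[ℝ] ℝ) (α : Fin m → ℝ)
    (g : Fin k → (Y × Z) →L[ℝ] ℝ) (β : Fin k → ℝ)
    (aF : X × Y) (LF : Submodule ℝ (X × Y))
    (aG : Y × Z) (LG : Submodule ℝ (Y × Z))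
    (hF : gph F = {p : X × Y | ∀ i, f i p ≤ α i} ∩ (aF +ᵥ (LF : Set (X × Y))))
    (hG : gph G = {q : Y × Z | ∀ j, g j q ≤ β j} ∩ (aG +ᵥ (LG : Set (Y × Z))))
    (hsplit : LF = ⊤ ∨ LG = ⊤)
    (xb : X) (yb : Y) (zb : Z) (hy : yb ∈ F xb) (hz : zb ∈ G yb)
    (w : Z →L[ℝ] ℝ) (u : X →L[ℝ] ℝ)
    (hu : ∀ x z, (∃ y ∈ F x, z ∈ G y) → u (x - xb) - w (z - zb) ≤ 0) :
    ∃ v : Y →L[ℝ] ℝ, v ∈ coderiv G yb zb w ∧ u ∈ coderiv F xb yb v := by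
  classical
  have hmemF : ∀ p : X × Y, p.2 ∈ F p.1 ↔ ((∀ i, f i p ≤ α i) ∧ p - aF ∈ LF) := by
    intro p
    have : p.2 ∈ F p.1 ↔ p ∈ gph F := Iff.rfl
    rw [this, hF, Set.mem_inter_iff, Set.mem_setOf_eq]
    refine and_congr_right fun _ => ?_
    rw [Set.mem_vadd_set_iff_neg_vadd_mem]
    simp [neg_add_eq_sub]
  have hmemG : ∀ q : Y × Z, q.2 ∈ G q.1 ↔ ((∀ j, g j q ≤ β j) ∧ q - aG ∈ LG) := by
    intro q
    have : q.2 ∈ G q.1 ↔ q ∈ gph G := Iff.rfl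
    rw [this, hG, Set.mem_inter_iff, Set.mem_setOf_eq]
    refine and_congr_right fun _ => ?_
    rw [Set.mem_vadd_set_iff_neg_vadd_mem]
    simp [neg_add_eq_sub]
  obtain ⟨hfb, hLFb⟩ := (hmemF (xb, yb)).1 hy
  obtain ⟨hgb, hLGb⟩ := (hmemG (yb, zb)).1 hz
  -- ambient subspace of directions
  set π1 : (X × (Y × Z)) →ₗ[ℝ] X × Y :=
    (LinearMap.fst ℝ X (Y × Z)).prod ((LinearMap.fst ℝ Y Z).comp (LinearMap.snd ℝ X (Y × Z)))
    with hπ1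
  set π2 : (X × (Y × Z)) →ₗ[ℝ] Y × Z := LinearMap.snd ℝ X (Y × Z) with hπ2
  have π1eval : ∀ p : X × (Y × Z), π1 p = (p.1, p.2.1) := fun p => rfl
  have π2eval : ∀ p : X × (Y × Z), π2 p = p.2 := fun p => rfl
  set V : Submodule ℝ (X × (Y × Z)) := LF.comap π1 ⊓ LG.comap π2 with hV
  have memV : ∀ p : X × (Y × Z), p ∈ V ↔ ((p.1, p.2.1) ∈ LF ∧ p.2 ∈ LG) := by
    intro p
    rw [hV, Submodule.mem_inf, Submodule.mem_comap, Submodule.mem_comap, π1eval, π2eval]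
  -- active constraints
  set ιF := {i : Fin m // f i (xb, yb) = α i} with hιF
  set ιG := {j : Fin k // g j (yb, zb) = β j} with hιG
  set cc : ιF ⊕ ιG → ↥V →ₗ[ℝ] ℝ := fun i =>
    Sum.elim (fun i : ιF => ((f i.1).toLinearMap.comp π1).comp V.subtype)
             (fun j : ιG => ((g j.1).toLinearMap.comp π2).comp V.subtype) i with hcc
  set φ : ↥V →ₗ[ℝ] ℝ :=
    ((u.toLinearMap.comp (LinearMap.fst ℝ X (Y × Z))).comp V.subtype) -
    ((w.toLinearMap.comp ((LinearMap.snd ℝ Y Z).comp π2)).comp V.subtype) with hφ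
  have hyp : ∀ d : ↥V, (∀ i, cc i d ≤ 0) → φ d ≤ 0 := by
    intro d hd
    obtain ⟨dp, hdp⟩ := d
    obtain ⟨hdF, hdG⟩ := (memV dp).1 hdp
    obtain ⟨t, htpos, ht⟩ := exists_pos_step
      (Sum.elim (fun i : Fin m => f i (dp.1, dp.2.1)) (fun j : Fin k => g j dp.2))
      (Sum.elim (fun i : Fin m => α i - f i (xb, yb)) (fun j : Fin k => β j - g j (yb, zb)))
      Finset.univ
      (by rintro (i | j) _
          · simpa using hfb i
          · simpa using hgb j)
      (by rintro (i | j) _ hact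
          · have hi : f i (xb, yb) = α i := by
              simp only [Sum.elim_inl, sub_eq_zero] at hact
              exact hact.symm
            have := hd (Sum.inl ⟨i, hi⟩)
            simpa [hcc, π1eval] using this
          · have hj : g j (yb, zb) = β j := by
              simp only [Sum.elim_inr, sub_eq_zero] at hact
              exact hact.symm
            have := hd (Sum.inr ⟨j, hj⟩)
            simpa [hcc, π2eval] using this)
    have hyF : yb + t • dp.2.1 ∈ F (xb + t • dp.1) := by
      refine (hmemF (xb + t • dp.1, yb + t • dp.2.1)).2 ⟨?_, ?_⟩
      · intro i
        have heq : ((xb + t • dp.1, yb + t • dp.2.1) : X × Y)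
            = (xb, yb) + t • (dp.1, dp.2.1) := rfl
        rw [heq, map_add, map_smul]
        have := ht (Sum.inl i) (Finset.mem_univ _)
        simp only [Sum.elim_inl] at this
        simp only [smul_eq_mul]
        linarith
      · have heq : ((xb + t • dp.1, yb + t • dp.2.1) : X × Y) - aF
            = ((xb, yb) - aF) + t • (dp.1, dp.2.1) := by
          change ((xb, yb) + t • (dp.1, dp.2.1)) - aF = _
          abel
        rw [heq]
        exact LF.add_mem hLFb (LF.smul_mem t hdF)
    have hzG : zb + t • dp.2.2 ∈ G (yb + t • dp.2.1) := by
      refine (hmemG (yb + t • dp.2.1, zb + t • dp.2.2)).2 ⟨?_, ?_⟩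
      · intro j
        have heq : ((yb + t • dp.2.1, zb + t • dp.2.2) : Y × Z)
            = (yb, zb) + t • dp.2 := rfl
        rw [heq, map_add, map_smul]
        have := ht (Sum.inr j) (Finset.mem_univ _)
        simp only [Sum.elim_inr] at this
        simp only [smul_eq_mul]
        linarith
      · have heq : ((yb + t • dp.2.1, zb + t • dp.2.2) : Y × Z) - aG
            = ((yb, zb) - aG) + t • dp.2 := by
          change ((yb, zb) + t • dp.2) - aG = _
          abel
        rw [heq]
        exact LG.add_mem hLGb (LG.smul_mem t hdG)
    have hineq := hu (xb + t • dp.1) (zb + t • dp.2.2) ⟨yb + t • dp.2.1, hyF, hzG⟩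
    simp only [add_sub_cancel_left, map_smul, smul_eq_mul] at hineq
    have hφval : φ ⟨dp, hdp⟩ = u dp.1 - w dp.2.2 := by
      simp [hφ, π2eval]
    rw [hφval]
    nlinarith [hineq, htpos]
  obtain ⟨lam, hlam, hid⟩ := farkas cc φ hyp
  have hid' : ∀ d : ↥V, u (d : X × (Y × Z)).1 - w (d : X × (Y × Z)).2.2 =
      (∑ i : ιF, lam (Sum.inl i) * f i.1 ((d : X × (Y × Z)).1, (d : X × (Y × Z)).2.1)) +
      (∑ j : ιG, lam (Sum.inr j) * g j.1 (d : X × (Y × Z)).2) := by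
    intro d
    have h1 := hid d
    rw [Fintype.sum_sum_type] at h1
    simpa [hφ, hcc, π1eval, π2eval] using h1
  rcases hsplit with hLF | hLG
  · -- F is polyhedral: LF = ⊤
    set vC : Y →L[ℝ] ℝ :=
      - ∑ i : ιF, lam (Sum.inl i) • ((f i.1).comp (ContinuousLinearMap.inr ℝ X Y)) with hvC
    have hv : ∀ y : Y, vC y = - ∑ i : ιF, lam (Sum.inl i) * f i.1 (0, y) := by
      intro y
      simp [hvC]
    have hE1 : ∀ dx : X, u dx = ∑ i : ιF, lam (Sum.inl i) * f i.1 (dx, 0) := by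
      intro dx
      have hmem : ((dx, 0) : X × (Y × Z)) ∈ V :=
        (memV _).2 ⟨by rw [hLF]; trivial, LG.zero_mem⟩
      have h1 := hid' ⟨(dx, 0), hmem⟩
      simpa using h1
    have hE2 : ∀ q : Y × Z, q ∈ LG → -(w q.2) =
        (∑ i : ιF, lam (Sum.inl i) * f i.1 (0, q.1)) +
        (∑ j : ιG, lam (Sum.inr j) * g j.1 q) := by
      intro q hq
      have hmem : ((0, q) : X × (Y × Z)) ∈ V :=
        (memV _).2 ⟨by rw [hLF]; trivial, hq⟩
      have h1 := hid' ⟨(0, q), hmem⟩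
      simpa using h1
    refine ⟨vC, ?_, ?_⟩
    · intro y' z' hz'
      obtain ⟨hg', hL'⟩ := (hmemG (y', z')).1 hz'
      have hq : ((y', z') - (yb, zb) : Y × Z) ∈ LG := by
        have h2 := LG.sub_mem hL' hLGb
        rwa [sub_sub_sub_cancel_right] at h2
      have h2 := hE2 _ hq
      rw [Prod.fst_sub, Prod.snd_sub] at h2
      have hbound : ∑ j : ιG, lam (Sum.inr j) * g j.1 ((y', z') - (yb, zb)) ≤ 0 := by
        refine Finset.sum_nonpos fun j _ => mul_nonpos_of_nonneg_of_nonpos (hlam _) ?_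
        rw [map_sub]
        have h3 := hg' j.1
        have hj := j.2
        linarith
      rw [hv]
      linarith
    · intro x' y' hy'
      obtain ⟨hf', _⟩ := (hmemF (x', y')).1 hy'
      have key : (∑ i : ιF, lam (Sum.inl i) * f i.1 (x' - xb, 0)) +
          (∑ i : ιF, lam (Sum.inl i) * f i.1 (0, y' - yb)) =
          ∑ i : ιF, lam (Sum.inl i) * f i.1 ((x', y') - (xb, yb)) := by
        rw [← Finset.sum_add_distrib]
        refine Finset.sum_congr rfl fun i _ => ?_
        rw [← mul_add, ← map_add]
        congr 1
        simp [Prod.ext_iff]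
      have hbound : ∑ i : ιF, lam (Sum.inl i) * f i.1 ((x', y') - (xb, yb)) ≤ 0 := by
        refine Finset.sum_nonpos fun i _ => mul_nonpos_of_nonneg_of_nonpos (hlam _) ?_
        rw [map_sub]
        have h3 := hf' i.1
        have hi := i.2
        linarith
      rw [hv]
      linarith [hE1 (x' - xb), key, hbound]
  · -- G is polyhedral: LG = ⊤
    set vC : Y →L[ℝ] ℝ :=
      ∑ j : ιG, lam (Sum.inr j) • ((g j.1).comp (ContinuousLinearMap.inl ℝ Y Z)) with hvC
    have hv : ∀ y : Y, vC y = ∑ j : ιG, lam (Sum.inr j) * g j.1 (y, 0) := by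
      intro y
      simp [hvC]
    have hE1 : ∀ p : X × Y, p ∈ LF → u p.1 =
        (∑ i : ιF, lam (Sum.inl i) * f i.1 p) +
        (∑ j : ιG, lam (Sum.inr j) * g j.1 (p.2, 0)) := by
      intro p hp
      have hmem : ((p.1, (p.2, 0)) : X × (Y × Z)) ∈ V :=
        (memV _).2 ⟨hp, by rw [hLG]; trivial⟩
      have h1 := hid' ⟨(p.1, (p.2, 0)), hmem⟩
      simpa using h1
    have hE2 : ∀ dz : Z, -(w dz) = ∑ j : ιG, lam (Sum.inr j) * g j.1 (0, dz) := by
      intro dz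
      have hmem : ((0, (0, dz)) : X × (Y × Z)) ∈ V :=
        (memV _).2 ⟨LF.zero_mem, by rw [hLG]; trivial⟩
      have h1 := hid' ⟨(0, (0, dz)), hmem⟩
      simpa [Prod.mk_zero_zero] using h1
    refine ⟨vC, ?_, ?_⟩
    · intro y' z' hz'
      obtain ⟨hg', _⟩ := (hmemG (y', z')).1 hz'
      have key : (∑ j : ιG, lam (Sum.inr j) * g j.1 (y' - yb, 0)) +
          (∑ j : ιG, lam (Sum.inr j) * g j.1 (0, z' - zb)) =
          ∑ j : ιG, lam (Sum.inr j) * g j.1 ((y', z') - (yb, zb)) := by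
        rw [← Finset.sum_add_distrib]
        refine Finset.sum_congr rfl fun j _ => ?_
        rw [← mul_add, ← map_add]
        congr 1
        simp [Prod.ext_iff]
      have hbound : ∑ j : ιG, lam (Sum.inr j) * g j.1 ((y', z') - (yb, zb)) ≤ 0 := by
        refine Finset.sum_nonpos fun j _ => mul_nonpos_of_nonneg_of_nonpos (hlam _) ?_
        rw [map_sub]
        have h3 := hg' j.1
        have hj := j.2
        linarith
      rw [hv]
      linarith [hE2 (z' - zb), key, hbound]
    · intro x' y' hy'
      obtain ⟨hf', hL'⟩ := (hmemF (x', y')).1 hy'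
      have hp : ((x', y') - (xb, yb) : X × Y) ∈ LF := by
        have h2 := LF.sub_mem hL' hLFb
        rwa [sub_sub_sub_cancel_right] at h2
      have h1 := hE1 _ hp
      rw [Prod.fst_sub, Prod.snd_sub] at h1
      have hbound : ∑ i : ιF, lam (Sum.inl i) * f i.1 ((x', y') - (xb, yb)) ≤ 0 := by
        refine Finset.sum_nonpos fun i _ => mul_nonpos_of_nonneg_of_nonpos (hlam _) ?_
        rw [map_sub]
        have h3 := hf' i.1
        have hi := i.2
        linarith
      rw [hv]
      linarith

variable {X : Type*} [AddCommGroup X] [Module ℝ X] [TopologicalSpace X]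
  [IsTopologicalAddGroup X] [ContinuousSMul ℝ X] [LocallyConvexSpace ℝ X] [T2Space X]
variable {Y : Type*} [AddCommGroup Y] [Module ℝ Y] [TopologicalSpace Y]
  [IsTopologicalAddGroup Y] [ContinuousSMul ℝ Y] [LocallyConvexSpace ℝ Y] [T2Space Y]
variable {Z : Type*} [AddCommGroup Z] [Module ℝ Z] [TopologicalSpace Z]
  [IsTopologicalAddGroup Z] [ContinuousSMul ℝ Z] [LocallyConvexSpace ℝ Z] [T2Space Z]

theorem coderivative_chain_rule
    (F : X → Set Y) (G : Y → Set Z)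
    (hFG : (IsPolyhedral (gph F) ∧ IsGPolyhedral (gph G)) ∨
           (IsGPolyhedral (gph F) ∧ IsPolyhedral (gph G)))
    (xb : X) (yb : Y) (zb : Z) (hy : yb ∈ F xb) (hz : zb ∈ G yb)
    (w : Z →L[ℝ] ℝ) :
    coderiv (fun x => ⋃ y ∈ F x, G y) xb zb w =
      ⋃ v ∈ coderiv G yb zb w, coderiv F xb yb v := by
  ext u
  simp only [Set.mem_iUnion, exists_prop]
  constructor
  · intro hu
    have hu' : ∀ x z, (∃ y ∈ F x, z ∈ G y) → u (x - xb) - w (z - zb) ≤ 0 := by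
      intro x z hxz
      obtain ⟨y, h1, h2⟩ := hxz
      exact hu x z (Set.mem_iUnion₂.2 ⟨y, h1, h2⟩)
    rcases hFG with ⟨⟨m, f, α, hF⟩, ⟨PG, aG, LG, ⟨k, g, β, hP⟩, _, hG⟩⟩ |
                    ⟨⟨PF, aF, LF, ⟨m, f, α, hP⟩, _, hF⟩, ⟨k, g, β, hG⟩⟩
    · subst hP
      have htop : ((0 : X × Y) +ᵥ ((⊤ : Submodule ℝ (X × Y)) : Set (X × Y))) = Set.univ := by
        ext p
        simp [Set.mem_vadd_set]
      have hF' : gph F = {p : X × Y | ∀ i, f i p ≤ α i} ∩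
          ((0 : X × Y) +ᵥ ((⊤ : Submodule ℝ (X × Y)) : Set (X × Y))) := by
        rw [htop, Set.inter_univ, hF]
      obtain ⟨v, hv1, hv2⟩ := chain_core F G f α g β 0 ⊤ aG LG hF' hG (Or.inl rfl)
        xb yb zb hy hz w u hu'
      exact ⟨v, hv1, hv2⟩
    · subst hP
      have htop : ((0 : Y × Z) +ᵥ ((⊤ : Submodule ℝ (Y × Z)) : Set (Y × Z))) = Set.univ := by
        ext p
        simp [Set.mem_vadd_set]
      have hG' : gph G = {q : Y × Z | ∀ j, g j q ≤ β j} ∩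
          ((0 : Y × Z) +ᵥ ((⊤ : Submodule ℝ (Y × Z)) : Set (Y × Z))) := by
        rw [htop, Set.inter_univ, hG]
      obtain ⟨v, hv1, hv2⟩ := chain_core F G f α g β aF LF 0 ⊤ hF hG' (Or.inr rfl)
        xb yb zb hy hz w u hu'
      exact ⟨v, hv1, hv2⟩
  · rintro ⟨v, hv, huv⟩
    intro x z hzmem
    rw [Set.mem_iUnion₂] at hzmem
    obtain ⟨y, hyx, hzy⟩ := hzmem
    have h1 := huv x y hyx
    have h2 := hv y z hzy
    linarith
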